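/- Let V : ℝⁿ → ℝ be continuously differentiable, and let ξ : [t₀, t₁] → ℝⁿ be a solution of an ODE ξ' = F(t, ξ) such that whenever V(ξ(t)) ≥ c (for a fixed constant c), the derivative d/dt V(ξ(t)) ≤ 0. If V(ξ(t₀)) ≤ c, then V(ξ(t)) ≤ c for all t ∈ [t₀, t₁]. (Sublevel-set invariance.) -/

import Mathlib

open Set

/-- sublevel-set invariance along solutions of an ODE. -/
theorem stmt4 {n : ℕ}
    (V : EuclideanSpace ℝ (Fin n) → ℝ) (hV : ContDiff ℝ 1 V)
    (t₀ t₁ c : ℝ) (ht : t₀ ≤ t₁)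
    (F : ℝ → EuclideanSpace ℝ (Fin n) → EuclideanSpace ℝ (Fin n))
    (ξ : ℝ → EuclideanSpace ℝ (Fin n))
    (hode : ∀ t ∈ Icc t₀ t₁, HasDerivAt ξ (F t (ξ t)) t)
    (hdec : ∀ t ∈ Icc t₀ t₁, c ≤ V (ξ t) → deriv (fun s => V (ξ s)) t ≤ 0)
    (h0 : V (ξ t₀) ≤ c) :
    ∀ t ∈ Icc t₀ t₁, V (ξ t) ≤ c := by
  set g : ℝ → ℝ := fun s => V (ξ s) with hg_def
  have hg : ∀ s ∈ Icc t₀ t₁, DifferentiableAt ℝ g s := by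
    intro s hs
    exact ((hV.differentiable one_ne_zero) (ξ s)).comp s (hode s hs).differentiableAt
  have hgc : ContinuousOn g (Icc t₀ t₁) := fun s hs =>
    (hg s hs).continuousAt.continuousWithinAt
  intro t htmem
  by_contra hcon
  push_neg at hcon
  have htt : t ≤ t₁ := htmem.2
  have h0t : t₀ ≤ t := htmem.1
  have hIcc_sub : Icc t₀ t ⊆ Icc t₀ t₁ := Icc_subset_Icc le_rfl htt
  set S : Set ℝ := Icc t₀ t ∩ g ⁻¹' Iic c with hS_def
  have hS_ne : S.Nonempty := ⟨t₀, ⟨le_rfl, h0t⟩, h0⟩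
  have hS_bdd : BddAbove S := ⟨t, fun s hs => hs.1.2⟩
  have hS_closed : IsClosed S :=
    (hgc.mono hIcc_sub).preimage_isClosed_of_isClosed isClosed_Icc isClosed_Iic
  set s₀ := sSup S with hs₀_def
  have hs₀_mem : s₀ ∈ S := hS_closed.csSup_mem hS_ne hS_bdd
  have hs₀_le : g s₀ ≤ c := hs₀_mem.2
  have hs₀_Icc : s₀ ∈ Icc t₀ t := hs₀_mem.1
  have hs₀_lt : s₀ < t := lt_of_le_of_ne hs₀_Icc.2 (by
    intro h; rw [h] at hs₀_le; exact absurd hs₀_le (not_le.mpr hcon))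
  have hgt : ∀ s ∈ Ioc s₀ t, c ≤ g s := by
    intro s hs
    by_contra hle
    push_neg at hle
    have hsS : s ∈ S := ⟨⟨hs₀_Icc.1.trans hs.1.le, hs.2⟩, hle.le⟩
    exact absurd (le_csSup hS_bdd hsS) (not_le.mpr hs.1)
  have hsub : Icc s₀ t ⊆ Icc t₀ t₁ := Icc_subset_Icc hs₀_Icc.1 htt
  have hanti : AntitoneOn g (Icc s₀ t) := by
    apply antitoneOn_of_deriv_nonpos (convex_Icc s₀ t) (hgc.mono hsub)
    · intro x hx
      rw [interior_Icc] at hx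
      exact (hg x (hsub (Ioo_subset_Icc_self hx))).differentiableWithinAt
    · intro x hx
      rw [interior_Icc] at hx
      exact hdec x (hsub (Ioo_subset_Icc_self hx)) (hgt x ⟨hx.1, hx.2.le⟩)
  have : g t ≤ g s₀ :=
    hanti ⟨le_rfl, hs₀_lt.le⟩ ⟨hs₀_lt.le, le_rfl⟩ hs₀_lt.le
  exact absurd (this.trans hs₀_le) (not_le.mpr hcon)
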